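/- A pair (p,q) of integers with p < 0, q > 0, p + q ≥ 0, gcd(p,q)=1 satisfies p + q = gcd(2q,-p) + gcd(q,-2p) if and only if (p,q) has one of the forms (2-6u, 1+6u), (4-6u, -1+6u), (1-6u, 2+6u), (5-6u, -2+6u), (1-2u, 1+2u) for some positive integer u making p negative and q positive. -/

import Mathlib

theorem stmt_18 (p q : ℤ) (hp : p < 0) (hq : 0 < q) (h1 : 0 ≤ p + q)
    (hgcd : Int.gcd p q = 1) :
    p + q = (Int.gcd (2 * q) (-p) : ℤ) + (Int.gcd q (-2 * p) : ℤ) ↔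
      ∃ u : ℤ, 0 < u ∧
        ((p, q) = (2 - 6 * u, 1 + 6 * u) ∨ (p, q) = (4 - 6 * u, -1 + 6 * u) ∨
         (p, q) = (1 - 6 * u, 2 + 6 * u) ∨ (p, q) = (5 - 6 * u, -2 + 6 * u) ∨
         (p, q) = (1 - 2 * u, 1 + 2 * u)) := by
  have hp0 : p ≠ 0 := by omega
  have hq0 : q ≠ 0 := by omega
  have hcop : IsCoprime p q := Int.isCoprime_iff_gcd_eq_one.mpr hgcd
  set a : ℕ := Int.gcd (2 * q) (-p) with ha_def
  set b : ℕ := Int.gcd q (-2 * p) with hb_def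
  -- a facts
  have ha1 : (a : ℤ) ∣ -p := Int.gcd_dvd_right _ _
  have ha2 : (a : ℤ) ∣ 2 * q := Int.gcd_dvd_left _ _
  have hacop : IsCoprime ((a : ℤ)) q :=
    IsCoprime.of_isCoprime_of_dvd_left hcop (dvd_neg.mp ha1)
  have had2 : (a : ℤ) ∣ 2 := hacop.dvd_of_dvd_mul_right ha2
  have ha0 : a ≠ 0 := by
    intro h
    have := Int.gcd_eq_zero_iff.mp (ha_def ▸ h)
    omega
  -- b facts
  have hb1 : (b : ℤ) ∣ q := Int.gcd_dvd_left _ _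
  have hb2 : (b : ℤ) ∣ 2 * (-p) := by
    have : (b : ℤ) ∣ -2 * p := Int.gcd_dvd_right _ _
    convert this using 1; ring
  have hbcop : IsCoprime ((b : ℤ)) p :=
    IsCoprime.of_isCoprime_of_dvd_left hcop.symm hb1
  have hbd2 : (b : ℤ) ∣ 2 := by
    have : IsCoprime ((b : ℤ)) (-p) := (IsCoprime.neg_right hbcop)
    exact this.dvd_of_dvd_mul_right hb2
  have hb0 : b ≠ 0 := by
    intro h
    have := Int.gcd_eq_zero_iff.mp (hb_def ▸ h)
    omega
  -- characterize a
  have hA : (2 ∣ p ∧ (a : ℤ) = 2) ∨ (¬ 2 ∣ p ∧ (a : ℤ) = 1) := by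
    by_cases h2p : (2 : ℤ) ∣ p
    · left
      refine ⟨h2p, ?_⟩
      have h2a : (2 : ℤ) ∣ (a : ℤ) := by
        rw [ha_def]
        exact Int.dvd_coe_gcd ⟨q, by ring⟩ (dvd_neg.mpr h2p)
      have h1' : 0 < (a : ℤ) := by exact_mod_cast Nat.pos_of_ne_zero ha0
      have := Int.le_of_dvd h1' h2a
      have := Int.le_of_dvd (by norm_num) had2
      omega
    · right
      refine ⟨h2p, ?_⟩
      have hle := Int.le_of_dvd (by norm_num) had2
      have h1' : 0 < (a : ℤ) := by exact_mod_cast Nat.pos_of_ne_zero ha0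
      have : (a : ℤ) = 1 ∨ (a : ℤ) = 2 := by
        rcases had2 with ⟨c, hc⟩
        omega
      rcases this with h | h
      · exact h
      · exfalso; exact h2p (dvd_neg.mp (h ▸ ha1))
  -- characterize b
  have hB : (2 ∣ q ∧ (b : ℤ) = 2) ∨ (¬ 2 ∣ q ∧ (b : ℤ) = 1) := by
    by_cases h2q : (2 : ℤ) ∣ q
    · left
      refine ⟨h2q, ?_⟩
      have h2b : (2 : ℤ) ∣ (b : ℤ) := by
        rw [hb_def]
        exact Int.dvd_coe_gcd h2q ⟨-p, by ring⟩
      have h1' : 0 < (b : ℤ) := by exact_mod_cast Nat.pos_of_ne_zero hb0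
      have := Int.le_of_dvd h1' h2b
      have := Int.le_of_dvd (by norm_num) hbd2
      omega
    · right
      refine ⟨h2q, ?_⟩
      have hle := Int.le_of_dvd (by norm_num) hbd2
      have h1' : 0 < (b : ℤ) := by exact_mod_cast Nat.pos_of_ne_zero hb0
      have : (b : ℤ) = 1 ∨ (b : ℤ) = 2 := by
        rcases hbd2 with ⟨c, hc⟩
        omega
      rcases this with h | h
      · exact h
      · exfalso; exact h2q (h ▸ hb1)
  have hnotboth : ¬ ((2 : ℤ) ∣ p ∧ (2 : ℤ) ∣ q) := by
    rintro ⟨h2p, h2q⟩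
    have : (2 : ℤ) ∣ Int.gcd p q := Int.dvd_coe_gcd h2p h2q
    rw [hgcd] at this
    norm_num at this
  constructor
  · intro h
    rcases hA with ⟨h2p, hav⟩ | ⟨h2p, hav⟩ <;> rcases hB with ⟨h2q, hbv⟩ | ⟨h2q, hbv⟩
    · exact absurd ⟨h2p, h2q⟩ hnotboth
    · -- p even, q odd, p+q = 3
      have hsum : p + q = 3 := by omega
      have h3p : ¬ (3 : ℤ) ∣ p := by
        intro h3
        have h3q : (3 : ℤ) ∣ q := by omega
        have : (3 : ℤ) ∣ Int.gcd p q := Int.dvd_coe_gcd h3 h3q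
        rw [hgcd] at this; norm_num at this
      have hcase : p % 6 = 2 ∨ p % 6 = 4 := by omega
      rcases hcase with hc | hc
      · exact ⟨(2 - p) / 6, by omega, Or.inl (by simp [Prod.ext_iff]; omega)⟩
      · exact ⟨(4 - p) / 6, by omega, Or.inr (Or.inl (by simp [Prod.ext_iff]; omega))⟩
    · -- q even, p odd, p+q = 3
      have hsum : p + q = 3 := by omega
      have h3q : ¬ (3 : ℤ) ∣ q := by
        intro h3
        have h3p : (3 : ℤ) ∣ p := by omega
        have : (3 : ℤ) ∣ Int.gcd p q := Int.dvd_coe_gcd h3p h3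
        rw [hgcd] at this; norm_num at this
      have hcase : q % 6 = 2 ∨ q % 6 = 4 := by omega
      rcases hcase with hc | hc
      · exact ⟨(q - 2) / 6, by omega, Or.inr (Or.inr (Or.inl (by simp [Prod.ext_iff]; omega)))⟩
      · exact ⟨(q + 2) / 6, by omega, Or.inr (Or.inr (Or.inr (Or.inl (by simp [Prod.ext_iff]; omega))))⟩
    · -- both odd, p+q = 2
      have hsum : p + q = 2 := by omega
      exact ⟨(q - 1) / 2, by omega, Or.inr (Or.inr (Or.inr (Or.inr (by simp [Prod.ext_iff]; omega))))⟩
  · rintro ⟨u, hu, hcases⟩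
    rcases hcases with hc | hc | hc | hc | hc <;>
      simp only [Prod.mk.injEq] at hc <;>
      obtain ⟨hpe, hqe⟩ := hc <;>
      subst hpe <;> subst hqe <;>
      rcases hA with ⟨h2p, hav⟩ | ⟨h2p, hav⟩ <;>
      rcases hB with ⟨h2q, hbv⟩ | ⟨h2q, hbv⟩ <;>
      omega
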